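/- Let a_1, a_2 be positive integers with gcd(a_1, a_2) = 1 such that either a_1 ≡ a_2 ≡ 1 (mod 3) or a_1 ≡ a_2 ≡ 2 (mod 3). Then the quotient ⟨a_1, a_2⟩/3 equals the numerical semigroup generated by a_1, a_2, (2a_1 + a_2)/3, and (a_1 + 2a_2)/3. -/

import Mathlib

/-- Corollary 3.4 (first part): for coprime `a₁, a₂` with `a₁ ≡ a₂ ≡ 1 (mod 3)` or
`a₁ ≡ a₂ ≡ 2 (mod 3)`, `⟨a₁, a₂⟩/3 = ⟨a₁, a₂, (2a₁+a₂)/3, (a₁+2a₂)/3⟩`. -/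
theorem quotient_three_same_residue
    (a₁ a₂ : ℕ) (h₁ : 0 < a₁) (h₂ : 0 < a₂) (hgcd : Nat.gcd a₁ a₂ = 1)
    (hmod : (a₁ % 3 = 1 ∧ a₂ % 3 = 1) ∨ (a₁ % 3 = 2 ∧ a₂ % 3 = 2)) :
    {m : ℕ | 3 * m ∈ AddSubmonoid.closure ({a₁, a₂} : Set ℕ)} =
      ↑(AddSubmonoid.closure
        ({a₁, a₂, (2 * a₁ + a₂) / 3, (a₁ + 2 * a₂) / 3} : Set ℕ)) := by
  have h3c : 3 * ((2 * a₁ + a₂) / 3) = 2 * a₁ + a₂ := by omega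
  have h3d : 3 * ((a₁ + 2 * a₂) / 3) = a₁ + 2 * a₂ := by omega
  set M := AddSubmonoid.closure ({a₁, a₂} : Set ℕ) with hM
  set N := AddSubmonoid.closure
      ({a₁, a₂, (2 * a₁ + a₂) / 3, (a₁ + 2 * a₂) / 3} : Set ℕ) with hN
  have hmulM : ∀ (k a : ℕ), a ∈ M → k * a ∈ M := fun k a ha => by
    simpa [smul_eq_mul] using nsmul_mem ha k
  have hmulN : ∀ (k a : ℕ), a ∈ N → k * a ∈ N := fun k a ha => by
    simpa [smul_eq_mul] using nsmul_mem ha k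
  have hm1 : a₁ ∈ M := AddSubmonoid.subset_closure (by simp)
  have hm2 : a₂ ∈ M := AddSubmonoid.subset_closure (by simp)
  have hn1 : a₁ ∈ N := AddSubmonoid.subset_closure (by simp)
  have hn2 : a₂ ∈ N := AddSubmonoid.subset_closure (by simp)
  have hnc : (2 * a₁ + a₂) / 3 ∈ N := AddSubmonoid.subset_closure (by simp)
  have hnd : (a₁ + 2 * a₂) / 3 ∈ N := AddSubmonoid.subset_closure (by simp)
  ext m
  simp only [Set.mem_setOf_eq, SetLike.mem_coe]
  constructor
  · intro hm
    rw [AddSubmonoid.mem_closure_pair] at hm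
    obtain ⟨x, y, hxy⟩ := hm
    simp only [smul_eq_mul] at hxy
    -- (x + y) % 3 = 0
    have e1 : x * a₁ % 3 = x % 3 * (a₁ % 3) % 3 := Nat.mul_mod x a₁ 3
    have e2 : y * a₂ % 3 = y % 3 * (a₂ % 3) % 3 := Nat.mul_mod y a₂ 3
    have e3 : (x * a₁ + y * a₂) % 3 = (x * a₁ % 3 + y * a₂ % 3) % 3 :=
      Nat.add_mod _ _ 3
    have hxy3 : (x + y) % 3 = 0 := by
      rcases hmod with ⟨ha, hb⟩ | ⟨ha, hb⟩ <;>
        (rw [ha] at e1; rw [hb] at e2; omega)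
    obtain ⟨x', y', hc⟩ : ∃ x' y', (x = 3 * x' ∧ y = 3 * y') ∨
        (x = 3 * x' + 1 ∧ y = 3 * y' + 2) ∨ (x = 3 * x' + 2 ∧ y = 3 * y' + 1) := by
      exact ⟨x / 3, y / 3, by omega⟩
    have hA := hmulN x' a₁ hn1
    have hB := hmulN y' a₂ hn2
    set A := x' * a₁ with hAe
    set B := y' * a₂ with hBe
    rcases hc with ⟨hx, hy⟩ | ⟨hx, hy⟩ | ⟨hx, hy⟩
    · have h : 3 * A + 3 * B = 3 * m := by rw [← hxy, hx, hy, hAe, hBe]; ring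
      have hm' : m = A + B := by omega
      rw [hm']; exact add_mem hA hB
    · have h : 3 * A + 3 * B + 3 * ((a₁ + 2 * a₂) / 3) = 3 * m := by
        rw [h3d, ← hxy, hx, hy, hAe, hBe]; ring
      have hm' : m = A + B + (a₁ + 2 * a₂) / 3 := by omega
      rw [hm']; exact add_mem (add_mem hA hB) hnd
    · have h : 3 * A + 3 * B + 3 * ((2 * a₁ + a₂) / 3) = 3 * m := by
        rw [h3c, ← hxy, hx, hy, hAe, hBe]; ring
      have hm' : m = A + B + (2 * a₁ + a₂) / 3 := by omega
      rw [hm']; exact add_mem (add_mem hA hB) hnc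
  · intro hm
    induction hm using AddSubmonoid.closure_induction with
    | mem g hg =>
      simp only [Set.mem_insert_iff, Set.mem_singleton_iff] at hg
      rcases hg with h | h | h | h
      · rw [h]; exact hmulM 3 a₁ hm1
      · rw [h]; exact hmulM 3 a₂ hm2
      · rw [h, h3c]; exact add_mem (hmulM 2 a₁ hm1) hm2
      · rw [h, h3d]; exact add_mem hm1 (hmulM 2 a₂ hm2)
    | zero => simpa using zero_mem M
    | add g h _ _ hg hh => rw [mul_add]; exact add_mem hg hh
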